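/- arXiv:1606.04312 — 3 statements merged into one kernel-verified Lean document; each statement's English description precedes it below -/
import Mathlib

section
/- Let n > 1 and equip Aut(ℂⁿ) with the compact-open topology. Then GL_n(ℂ), viewed as the subgroup of linear automorphisms inside Aut(ℂⁿ), is a deformation retract of Aut(ℂⁿ); in particular the inclusion GL_n(ℂ) ↪ Aut(ℂⁿ) is a homotopy equivalence. -/
open scoped Topology
open Asymptotics Set Filter

noncomputable section

/-- The complex Euclidean space `ℂⁿ`. -/
abbrev Cn (n : ℕ) := EuclideanSpace ℂ (Fin n)

/-- A map is holomorphic on a subset `S` of a complex normed space if near every point of `S`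
it agrees on `S` with a map holomorphic on an open neighborhood of that point. -/
def HoloOn {E F : Type} [NormedAddCommGroup E] [NormedSpace ℂ E]
    [NormedAddCommGroup F] [NormedSpace ℂ F] (S : Set E) (f : E → F) : Prop :=
  ∀ p ∈ S, ∃ U : Set E, IsOpen U ∧ p ∈ U ∧ ∃ g : E → F,
    DifferentiableOn ℂ g U ∧ EqOn f g (S ∩ U)

/-- `X ⊆ ℂ^N` is a closed analytic subset: it is closed and locally cut out by finitely many
holomorphic functions.  By the embedding theorem this is a model for a finite dimensional
reduced Stein space. -/
def IsClosedAnalyticSubset {N : ℕ} (X : Set (Cn N)) : Prop :=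
  IsClosed X ∧ ∀ p ∈ X, ∃ U : Set (Cn N), IsOpen U ∧ p ∈ U ∧
    ∃ (m : ℕ) (g : Fin m → Cn N → ℂ), (∀ i, DifferentiableOn ℂ (g i) U) ∧
      X ∩ U = {z ∈ U | ∀ i, g i z = 0}

/-- `X ⊆ ℂ^N` is a closed complex submanifold of `ℂ^N` (locally biholomorphically
straightened to a coordinate subspace).  By the embedding theorem this is a model for a
Stein manifold. -/
def IsSteinSubmanifold {N : ℕ} (X : Set (Cn N)) : Prop :=
  IsClosed X ∧ ∀ p ∈ X, ∃ (d : ℕ) (U : Set (Cn N)) (φ ψ : Cn N → Cn N),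
    IsOpen U ∧ p ∈ U ∧ DifferentiableOn ℂ φ U ∧ IsOpen (φ '' U) ∧
    DifferentiableOn ℂ ψ (φ '' U) ∧ (∀ z ∈ U, ψ (φ z) = z) ∧
    X ∩ U = {z ∈ U | ∀ i : Fin N, d ≤ (i : ℕ) → φ z i = 0}

/-- `f` is a holomorphic automorphism of `ℂⁿ`. -/
def IsAutCn {n : ℕ} (f : Cn n → Cn n) : Prop :=
  Function.Bijective f ∧ Differentiable ℂ f ∧
    ∃ g : Cn n → Cn n, Differentiable ℂ g ∧
      Function.LeftInverse g f ∧ Function.RightInverse g f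

/-- The complex Jacobian matrix of `f` at `z`. -/
def jacMatrix {n : ℕ} (f : Cn n → Cn n) (z : Cn n) : Matrix (Fin n) (Fin n) ℂ :=
  fun i j => fderiv ℂ f z (EuclideanSpace.single j 1) i

/-- The complex Jacobian determinant of `f` at `z`. -/
def jacDet {n : ℕ} (f : Cn n → Cn n) (z : Cn n) : ℂ :=
  (jacMatrix f z).det

/-- A map `ℂⁿ → ℂⁿ` is volume preserving if its Jacobian determinant is `1` everywhere. -/
def VolumePreserving {n : ℕ} (f : Cn n → Cn n) : Prop :=
  ∀ z, jacDet f z = 1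

/-- `f : ℂⁿ → ℂⁿ` is a polynomial map of (total) degree at most `k`. -/
def IsPolyMapDegLe (n k : ℕ) (f : Cn n → Cn n) : Prop :=
  ∃ p : Fin n → MvPolynomial (Fin n) ℂ, (∀ i, (p i).totalDegree ≤ k) ∧
    ∀ z : Cn n, ∀ i : Fin n, f z i = MvPolynomial.eval (fun j => z j) (p i)

/-- `P` is a holomorphic family, parametrized by `X ⊆ ℂ^N`, of nondegenerate `k`-jets at
`p ∈ ℂⁿ` sending `p` to `q`, i.e. of elements of `J^k_{p,q}(ℂⁿ)`. -/
def IsHolJetFamily {N : ℕ} (X : Set (Cn N)) {n : ℕ} (k : ℕ) (p q : Cn n)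
    (P : Cn N → Cn n → Cn n) : Prop :=
  HoloOn (X ×ˢ (univ : Set (Cn n))) (fun w : Cn N × Cn n => P w.1 w.2) ∧
  (∀ x ∈ X, IsPolyMapDegLe n k (P x)) ∧
  (∀ x ∈ X, P x p = q) ∧
  (∀ x ∈ X, (jacMatrix (P x) p).det ≠ 0)

/-- `F` is a holomorphic family, parametrized by `X`, of holomorphic automorphisms of `ℂⁿ`,
i.e. a holomorphic map `X → Aut(ℂⁿ)`. -/
def IsHolFamilyAut {N n : ℕ} (X : Set (Cn N)) (F : Cn N → Cn n → Cn n) : Prop :=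
  (∀ x ∈ X, IsAutCn (F x)) ∧
  HoloOn (X ×ˢ (univ : Set (Cn n))) (fun w : Cn N × Cn n => F w.1 w.2)

/-- The family `F : X → Aut(ℂⁿ)` is nullhomotopic: it is homotopic, through families of
holomorphic automorphisms, to a constant family. -/
def NullhomotopicFamilyAut {N n : ℕ} (X : Set (Cn N)) (F : Cn N → Cn n → Cn n) : Prop :=
  ∃ H : ℝ → Cn N → Cn n → Cn n,
    ContinuousOn (fun w : ℝ × Cn N × Cn n => H w.1 w.2.1 w.2.2)
      (Icc (0 : ℝ) 1 ×ˢ X ×ˢ (univ : Set (Cn n))) ∧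
    (∀ t ∈ Icc (0 : ℝ) 1, ∀ x ∈ X, IsAutCn (H t x)) ∧
    (∀ x ∈ X, H 1 x = F x) ∧
    (∃ f₀, ∀ x ∈ X, H 0 x = f₀)

/-- A matrix-valued map on `X` is nullhomotopic as a map into `GLₙ(ℂ)`: it is homotopic,
through maps with invertible values, to a constant map. -/
def NullhomotopicToGL {N n : ℕ} (X : Set (Cn N)) (Q : Cn N → Matrix (Fin n) (Fin n) ℂ) : Prop :=
  ∃ H : ℝ → Cn N → Matrix (Fin n) (Fin n) ℂ,
    (∀ i j, ContinuousOn (fun w : ℝ × Cn N => H w.1 w.2 i j) (Icc (0 : ℝ) 1 ×ˢ X)) ∧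
    (∀ t ∈ Icc (0 : ℝ) 1, ∀ x ∈ X, (H t x).det ≠ 0) ∧
    (∀ x ∈ X, H 1 x = Q x) ∧
    (∃ A, ∀ x ∈ X, H 0 x = A)

/-- The point `(c, 0, …, 0) ∈ ℂⁿ`. -/
def axisPt (n : ℕ) (c : ℂ) : Cn n :=
  WithLp.toLp 2 (fun i : Fin n => if (i : ℕ) = 0 then c else 0)

/-- A sequence in `ℂⁿ` is tame if some holomorphic automorphism takes it to the sequence
`(j, 0, …, 0)`, `j = 1, 2, …`. -/
def TameSeq {n : ℕ} (a : ℕ → Cn n) : Prop :=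
  ∃ F : Cn n → Cn n, IsAutCn F ∧ ∀ j : ℕ, F (a j) = axisPt n ((j : ℂ) + 1)

/-- A sequence in `ℂⁿ` is very tame if some volume preserving holomorphic automorphism takes
it to the sequence `(j, 0, …, 0)`, `j = 1, 2, …`. -/
def VeryTameSeq {n : ℕ} (a : ℕ → Cn n) : Prop :=
  ∃ F : Cn n → Cn n, IsAutCn F ∧ VolumePreserving F ∧
    ∀ j : ℕ, F (a j) = axisPt n ((j : ℂ) + 1)

/-- The automorphism group `Aut(ℂⁿ)` as a subset of `C(ℂⁿ, ℂⁿ)` with the compact-open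
topology. -/
def AutSet (n : ℕ) : Set C(Cn n, Cn n) :=
  {f | IsAutCn f}

/-- `GLₙ(ℂ)`, viewed as the subset of linear automorphisms inside `Aut(ℂⁿ) ⊆ C(ℂⁿ, ℂⁿ)`. -/
def LinAutSet (n : ℕ) : Set C(Cn n, Cn n) :=
  {f | IsAutCn f ∧ IsLinearMap ℂ f}

/-- The inclusion `GLₙ(ℂ) ↪ Aut(ℂⁿ)` (of subspaces of `C(ℂⁿ, ℂⁿ)`). -/
def linAutInclusion (n : ℕ) : C(LinAutSet n, AutSet n) :=
  ⟨fun f => ⟨f.1, f.2.1⟩, (continuous_subtype_val.subtype_mk _)⟩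


-- ====================== auxiliary development ======================
set_option linter.unusedSectionVars false

section Aux


section
variable {F : Type} [NormedAddCommGroup F] [NormedSpace ℂ F] [CompleteSpace F]

lemma coeff_bound (f : ℂ → F) (hf : Continuous f) (M : ℝ)
    (hM : ∀ w : ℂ, ‖w‖ ≤ 2 → ‖f w‖ ≤ M) (n : ℕ) :
    ‖(cauchyPowerSeries f 0 2).coeff n‖ ≤ M / 2 ^ n := by
  have h1 : ‖(cauchyPowerSeries f 0 2).coeff n‖ = ‖cauchyPowerSeries f 0 2 n‖ :=
    (FormalMultilinearSeries.norm_apply_eq_norm_coef).symm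
  rw [h1]
  refine (norm_cauchyPowerSeries_le f 0 2 n).trans ?_
  have hbd : ∀ θ ∈ Set.uIcc (0:ℝ) (2 * Real.pi), ‖f (circleMap 0 2 θ)‖ ≤ M := by
    intro θ _
    refine hM _ ?_
    have : ‖circleMap 0 2 θ‖ = |(2:ℝ)| := norm_circleMap_zero 2 θ
    simp only [this]; norm_num
  have hint : (∫ θ : ℝ in (0)..2 * Real.pi, ‖f (circleMap 0 2 θ)‖) ≤ 2 * Real.pi * M := by
    calc (∫ θ : ℝ in (0)..2 * Real.pi, ‖f (circleMap 0 2 θ)‖)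
        ≤ ∫ _ : ℝ in (0)..2 * Real.pi, M := by
          apply intervalIntegral.integral_mono_on Real.two_pi_pos.le
          · exact ((hf.comp (continuous_circleMap 0 2)).norm.intervalIntegrable 0 (2*Real.pi))
          · exact intervalIntegrable_const
          · intro θ hθ; exact hbd θ (by rw [Set.uIcc_of_le Real.two_pi_pos.le]; exact hθ)
      _ = 2 * Real.pi * M := by simp [mul_comm]
  have h2 : (2 * Real.pi)⁻¹ * (∫ θ : ℝ in (0)..2 * Real.pi, ‖f (circleMap 0 2 θ)‖) ≤ M := by
    rw [inv_mul_le_iff₀ Real.two_pi_pos]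
    exact hint.trans (by ring_nf; exact le_rfl)
  calc ((2 * Real.pi)⁻¹ * ∫ θ : ℝ in (0)..2 * Real.pi, ‖f (circleMap 0 2 θ)‖) * |(2:ℝ)|⁻¹ ^ n
      ≤ M * |(2:ℝ)|⁻¹ ^ n := by
        apply mul_le_mul_of_nonneg_right h2 (by positivity)
    _ = M / 2 ^ n := by rw [abs_of_pos (by norm_num : (0:ℝ) < 2)]; rw [div_eq_mul_inv, inv_pow]

end

section
variable {F : Type} [NormedAddCommGroup F] [NormedSpace ℂ F] [CompleteSpace F]

lemma oneDim_est (f : ℂ → F) (hf : Differentiable ℂ f) (M : ℝ)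
    (hM : ∀ w : ℂ, ‖w‖ ≤ 2 → ‖f w‖ ≤ M) (s : ℂ) (hs : ‖s‖ ≤ 1) :
    ‖f s - f 0 - s • deriv f 0‖ ≤ M * ‖s‖ ^ 2 ∧ ‖deriv f 0‖ ≤ M := by
  have hM0 : 0 ≤ M := le_trans (norm_nonneg _) (hM 0 (by norm_num))
  set p := cauchyPowerSeries f 0 2 with hp
  have hball : HasFPowerSeriesOnBall f p 0 2 := by
    have h0 := (hf.differentiableOn (s := Metric.closedBall (0:ℂ) ((2:NNReal):ℝ))).hasFPowerSeriesOnBall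
      (R := (2:NNReal)) (by norm_num)
    have e1 : ((2:NNReal):ℝ) = (2:ℝ) := by norm_num
    have e2 : ((2:NNReal):ENNReal) = (2:ENNReal) := by norm_num
    rw [e1, e2] at h0
    exact h0
  have hat : HasFPowerSeriesAt f p 0 := hball.hasFPowerSeriesAt
  have hcb : ∀ n, ‖p.coeff n‖ ≤ M / 2 ^ n := coeff_bound f hf.continuous M hM
  have hderiv : deriv f 0 = p.coeff 1 := hat.deriv
  have hzero : p.coeff 0 = f 0 := by
    exact hball.coeff_zero 1
  have hmem : s ∈ Metric.eball (0 : ℂ) 2 := by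
    simp only [Metric.mem_eball, edist_zero_right]
    have h1 : (‖s‖₊ : ENNReal) ≤ 1 := by
      rw [ENNReal.coe_le_one_iff]
      exact_mod_cast hs
    exact lt_of_le_of_lt h1 (by norm_num)
  have hsum : HasSum (fun n : ℕ => s ^ n • p.coeff n) (f s) := by
    have h := hball.hasSum (y := s) hmem
    rw [zero_add] at h
    have he : (fun n : ℕ => p n fun _ => s) = fun n : ℕ => s ^ n • p.coeff n := by
      funext n; exact FormalMultilinearSeries.apply_eq_pow_smul_coeff
    rwa [he] at h
  have htail : HasSum (fun n : ℕ => s ^ (n + 2) • p.coeff (n + 2))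
      (f s - (f 0 + s • deriv f 0)) := by
    have h2 : (∑ i ∈ Finset.range 2, s ^ i • p.coeff i) = f 0 + s • deriv f 0 := by
      rw [Finset.sum_range_succ, Finset.sum_range_one, pow_zero, pow_one, one_smul, hzero, hderiv]
    have htail' := (hasSum_nat_add_iff' (f := fun n : ℕ => s ^ n • p.coeff n) 2).2 hsum
    rwa [h2] at htail'
  have hgeo : HasSum (fun n : ℕ => (M * ‖s‖ ^ 2 / 4) * (1 / 2 : ℝ) ^ n)
      ((M * ‖s‖ ^ 2 / 4) * (1 - 1 / 2)⁻¹) :=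
    (hasSum_geometric_of_lt_one (by norm_num) (by norm_num)).mul_left _
  have hbound : ∀ n : ℕ, ‖s ^ (n + 2) • p.coeff (n + 2)‖ ≤ (M * ‖s‖ ^ 2 / 4) * (1 / 2) ^ n := by
    intro n
    rw [norm_smul, norm_pow]
    have h1 : ‖s‖ ^ (n + 2) ≤ ‖s‖ ^ 2 := by
      apply pow_le_pow_of_le_one (norm_nonneg _) hs; omega
    calc ‖s‖ ^ (n + 2) * ‖p.coeff (n + 2)‖ ≤ ‖s‖ ^ 2 * (M / 2 ^ (n + 2)) :=
          mul_le_mul h1 (hcb (n + 2)) (norm_nonneg _) (by positivity)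
      _ ≤ (M * ‖s‖ ^ 2 / 4) * (1 / 2) ^ n := by
          rw [pow_add]
          ring_nf
          exact le_of_eq (by norm_num)
  have hnorm : ‖f s - (f 0 + s • deriv f 0)‖ ≤ (M * ‖s‖ ^ 2 / 4) * (1 - 1 / 2 : ℝ)⁻¹ :=
    htail.norm_le_of_bounded hgeo hbound
  constructor
  · have : f s - f 0 - s • deriv f 0 = f s - (f 0 + s • deriv f 0) := by abel
    rw [this]
    refine hnorm.trans ?_
    have hs2 : 0 ≤ ‖s‖ ^ 2 := by positivity
    nlinarith
  · rw [hderiv]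
    refine (hcb 1).trans ?_
    nlinarith

end

section
variable {n : ℕ}

lemma key_est (f : Cn n → Cn n) (hf : Differentiable ℂ f) (R M : ℝ)
    (hM : ∀ w : Cn n, ‖w‖ ≤ 2 * R → ‖f w‖ ≤ M) (z : Cn n) (hz : ‖z‖ ≤ R) (s : ℂ)
    (hs : ‖s‖ ≤ 1) :
    ‖f (s • z) - f 0 - s • (fderiv ℂ f 0 z)‖ ≤ M * ‖s‖ ^ 2 ∧ ‖fderiv ℂ f 0 z‖ ≤ M := by
  set h : ℂ → Cn n := fun l => f (l • z) with hh_def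
  have hline : Differentiable ℂ (fun l : ℂ => l • z) := differentiable_id.smul_const z
  have hh : Differentiable ℂ h := hf.comp hline
  have hd0 : HasDerivAt (fun l : ℂ => l • z) z 0 := by
    simpa using (hasDerivAt_id (0 : ℂ)).smul_const z
  have hF : HasFDerivAt f (fderiv ℂ f 0) ((0 : ℂ) • z) := by
    rw [zero_smul]; exact hf.differentiableAt.hasFDerivAt
  have hDh : HasDerivAt h (fderiv ℂ f 0 z) 0 := by
    have := hF.comp_hasDerivAt 0 hd0
    exact this
  have hderiv : deriv h 0 = fderiv ℂ f 0 z := hDh.deriv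
  have hMh : ∀ w : ℂ, ‖w‖ ≤ 2 → ‖h w‖ ≤ M := by
    intro w hw
    refine hM _ ?_
    rw [norm_smul]
    nlinarith [norm_nonneg z, norm_nonneg w]
  have h0 : h 0 = f 0 := by simp [hh_def]
  have hs0 : h s = f (s • z) := rfl
  have := oneDim_est h hh M hMh s hs
  rw [hderiv, h0, hs0] at this
  exact this

lemma isAutCn_comp {f g : Cn n → Cn n} (hf : IsAutCn f) (hg : IsAutCn g) :
    IsAutCn (f ∘ g) := by
  obtain ⟨hbf, hdf, f', hdf', hlf, hrf⟩ := hf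
  obtain ⟨hbg, hdg, g', hdg', hlg, hrg⟩ := hg
  exact ⟨hbf.comp hbg, hdf.comp hdg, g' ∘ f', hdg'.comp hdf',
    fun x => by simp [Function.comp, hlf (g x), hlg x],
    fun x => by simp [Function.comp, hrg (f' x), hrf x]⟩

lemma isAutCn_affine (c : ℂ) (hc : c ≠ 0) (b : Cn n) :
    IsAutCn (fun z : Cn n => c • z + b) := by
  have hinv : ∀ w : Cn n, c • (c⁻¹ • (w - b)) + b = w := by
    intro w
    rw [smul_smul, mul_inv_cancel₀ hc, one_smul, sub_add_cancel]
  have hinv' : ∀ z : Cn n, c⁻¹ • (c • z + b - b) = z := by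
    intro z
    rw [add_sub_cancel_right, smul_smul, inv_mul_cancel₀ hc, one_smul]
  refine ⟨?_, ?_, (fun w => c⁻¹ • (w - b)), ?_, fun z => hinv' z, fun w => hinv w⟩
  · constructor
    · intro x y hxy
      have h' := congrArg (fun w => c⁻¹ • (w - b)) hxy
      simp only [hinv'] at h'
      exact h'
    · intro w; exact ⟨c⁻¹ • (w - b), hinv w⟩
  · exact (differentiable_id.const_smul c).add_const b
  · exact ((differentiable_id.sub_const b).const_smul (c⁻¹))

lemma aut_fderiv_linaut {f : Cn n → Cn n} (hf : IsAutCn f) :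
    IsAutCn (fun z => fderiv ℂ f 0 z) ∧ IsLinearMap ℂ (fun z => fderiv ℂ f 0 z) := by
  obtain ⟨hbij, hdf, g, hdg, hleft, hright⟩ := hf
  have hgf : g ∘ f = id := funext fun x => hleft x
  have hfg : f ∘ g = id := funext fun x => hright x
  have hcomp1 : fderiv ℂ (g ∘ f) 0 = (fderiv ℂ g (f 0)).comp (fderiv ℂ f 0) :=
    fderiv_comp 0 (hdg _) (hdf _)
  have h1 : (fderiv ℂ g (f 0)).comp (fderiv ℂ f 0) = ContinuousLinearMap.id ℂ (Cn n) := by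
    rw [← hcomp1, hgf, fderiv_id]
  have hgf0 : g (f 0) = 0 := hleft 0
  have hcomp2 : fderiv ℂ (f ∘ g) (f 0) = (fderiv ℂ f (g (f 0))).comp (fderiv ℂ g (f 0)) :=
    fderiv_comp _ (hdf _) (hdg _)
  have h2 : (fderiv ℂ f 0).comp (fderiv ℂ g (f 0)) = ContinuousLinearMap.id ℂ (Cn n) := by
    rw [hgf0] at hcomp2
    rw [← hcomp2, hfg, fderiv_id]
  have hli : Function.LeftInverse (fun w => fderiv ℂ g (f 0) w) (fun z => fderiv ℂ f 0 z) := by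
    intro z
    have := congrArg (fun L : Cn n →L[ℂ] Cn n => L z) h1
    simpa using this
  have hri : Function.RightInverse (fun w => fderiv ℂ g (f 0) w) (fun z => fderiv ℂ f 0 z) := by
    intro w
    have := congrArg (fun L : Cn n →L[ℂ] Cn n => L w) h2
    simpa using this
  refine ⟨⟨⟨hli.injective, hri.surjective⟩, (fderiv ℂ f 0).differentiable,
    (fun w => fderiv ℂ g (f 0) w), (fderiv ℂ g (f 0)).differentiable, hli, hri⟩, ?_⟩
  exact ⟨fun x y => (fderiv ℂ f 0).map_add x y, fun c x => (fderiv ℂ f 0).map_smul c x⟩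

end

section
open Metric

variable {n : ℕ}

def DCM (f : C(Cn n, Cn n)) : C(Cn n, Cn n) :=
  ⟨fun z => fderiv ℂ f 0 z, (fderiv ℂ f 0).continuous⟩

def scaleCM (n : ℕ) (t : ℝ) : C(Cn n, Cn n) :=
  ⟨fun z => (t : ℂ) • z, continuous_id.const_smul (t : ℂ)⟩

def Hmap (n : ℕ) (t : ℝ) (f : C(Cn n, Cn n)) : C(Cn n, Cn n) :=
  if t = 0 then DCM f
  else ((t : ℂ)⁻¹ • (f.comp (scaleCM n t) - ContinuousMap.const _ (f 0))) +
    (t : ℂ) • ContinuousMap.const _ (f 0)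

lemma Hmap_zero (f : C(Cn n, Cn n)) : Hmap n 0 f = DCM f := if_pos rfl

lemma Hmap_apply_ne (t : ℝ) (ht : t ≠ 0) (f : C(Cn n, Cn n)) (z : Cn n) :
    Hmap n t f z = (t : ℂ)⁻¹ • (f ((t : ℂ) • z) - f 0) + (t : ℂ) • f 0 := by
  rw [Hmap, if_neg ht]
  simp [scaleCM]

lemma Hmap_one (f : C(Cn n, Cn n)) : Hmap n 1 f = f := by
  ext z
  rw [Hmap_apply_ne 1 one_ne_zero]
  simp

lemma Hmap_mem_autSet {t : ℝ} (ht : t ≠ 0) {f : C(Cn n, Cn n)} (hf : f ∈ AutSet n) :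
    Hmap n t f ∈ AutSet n := by
  have htC : (t : ℂ) ≠ 0 := by exact_mod_cast ht
  have h1 : IsAutCn (fun w : Cn n => (t : ℂ)⁻¹ • w + ((t : ℂ) • f 0 - (t : ℂ)⁻¹ • f 0)) :=
    isAutCn_affine _ (inv_ne_zero htC) _
  have h2 : IsAutCn (fun z : Cn n => (t : ℂ) • z + 0) := isAutCn_affine _ htC 0
  have hcomp := isAutCn_comp (isAutCn_comp h1 hf) h2
  have heq : ((fun w : Cn n => (t : ℂ)⁻¹ • w + ((t : ℂ) • f 0 - (t : ℂ)⁻¹ • f 0)) ∘ ⇑f) ∘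
      (fun z : Cn n => (t : ℂ) • z + 0) = ⇑(Hmap n t f) := by
    funext z
    simp only [Function.comp_apply, add_zero]
    rw [Hmap_apply_ne t ht, smul_sub]
    abel
  rw [heq] at hcomp
  exact hcomp

lemma Hmap_zero_mem_linAutSet {f : C(Cn n, Cn n)} (hf : f ∈ AutSet n) :
    Hmap n 0 f ∈ LinAutSet n := by
  rw [Hmap_zero]
  exact aut_fderiv_linaut hf

lemma Hmap_zero_of_lin {f : C(Cn n, Cn n)} (hf : f ∈ LinAutSet n) : Hmap n 0 f = f := by
  rw [Hmap_zero]
  obtain ⟨-, hlin⟩ := hf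
  set L' : Cn n →L[ℂ] Cn n := ⟨IsLinearMap.mk' ⇑f hlin, f.continuous⟩ with hL'
  have hco : ⇑f = ⇑L' := rfl
  refine ContinuousMap.ext fun z => ?_
  show fderiv ℂ (⇑f) 0 z = f z
  rw [hco, L'.fderiv]
end

section
open Metric
variable {n : ℕ}

def Gmap (n : ℕ) (w : ℝ × C(Cn n, Cn n)) : C(Cn n, Cn n) :=
  ((w.1 : ℂ)⁻¹ • (w.2.comp (scaleCM n w.1) - ContinuousMap.const _ (w.2 0))) +
    (w.1 : ℂ) • ContinuousMap.const _ (w.2 0)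

lemma continuous_scaleCM : Continuous fun t : ℝ => scaleCM n t :=
  ContinuousMap.continuous_of_continuous_uncurry _
    ((Complex.continuous_ofReal.comp continuous_fst).smul continuous_snd)

lemma continuousAt_Gmap {w : ℝ × C(Cn n, Cn n)} (hw : w.1 ≠ 0) :
    ContinuousAt (Gmap n) w := by
  have hconst : Continuous fun w : ℝ × C(Cn n, Cn n) => ContinuousMap.const (Cn n) (w.2 0) :=
    ContinuousMap.continuous_const'.comp ((continuous_eval_const 0).comp continuous_snd)
  have hcomp : Continuous fun w : ℝ × C(Cn n, Cn n) => w.2.comp (scaleCM n w.1) :=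
    ContinuousMap.continuous_comp'.comp
      (((continuous_scaleCM).comp continuous_fst).prodMk continuous_snd)
  have hinv : ContinuousAt (fun w : ℝ × C(Cn n, Cn n) => ((w.1 : ℂ))⁻¹) w := by
    apply ContinuousAt.inv₀
    · exact (Complex.continuous_ofReal.comp continuous_fst).continuousAt
    · exact_mod_cast hw
  exact (hinv.smul (hcomp.sub hconst).continuousAt).add
    ((Complex.continuous_ofReal.comp continuous_fst).continuousAt.smul hconst.continuousAt)

lemma contH (n : ℕ) : ContinuousOn (fun w : ℝ × C(Cn n, Cn n) => Hmap n w.1 w.2)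
    (Set.Icc (0 : ℝ) 1 ×ˢ AutSet n) := by
  rintro ⟨t₀, f₀⟩ ⟨ht₀, hf₀⟩
  by_cases h0 : t₀ = 0
  · subst h0
    have hdf₀ : Differentiable ℂ ⇑f₀ := hf₀.2.1
    show ContinuousWithinAt _ _ _
    rw [ContinuousWithinAt, Hmap_zero]
    rw [ContinuousMap.tendsto_iff_forall_isCompact_tendstoUniformlyOn]
    intro K hK
    rw [Metric.tendstoUniformlyOn_iff]
    intro ε hε
    obtain ⟨r, hrK⟩ := hK.isBounded.subset_closedBall 0
    set R : ℝ := max r 1 with hRdef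
    have hR1 : (1 : ℝ) ≤ R := le_max_right r 1
    have hR0 : (0 : ℝ) < R := lt_of_lt_of_le one_pos hR1
    have hKR : ∀ z ∈ K, ‖z‖ ≤ R := by
      intro z hz
      have h' := hrK.trans (closedBall_subset_closedBall (le_max_left r 1)) hz
      rwa [mem_closedBall, dist_zero_right] at h'
    obtain ⟨M₀, hM₀⟩ := (isCompact_closedBall (0 : Cn n) (2 * R)).exists_bound_of_continuousOn
      f₀.continuous.continuousOn
    set M : ℝ := max M₀ 0 with hMdef
    have hM0 : (0 : ℝ) ≤ M := le_max_right _ _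
    have hMb : ∀ w : Cn n, ‖w‖ ≤ 2 * R → ‖f₀ w‖ ≤ M := fun w hw =>
      (hM₀ w (by simpa [mem_closedBall, dist_zero_right] using hw)).trans (le_max_left _ _)
    set η : ℝ := min 1 (ε / 4) with hηdef
    have hη0 : 0 < η := lt_min one_pos (by positivity)
    have hη1 : η ≤ 1 := min_le_left _ _
    have hη4 : η ≤ ε / 4 := min_le_right _ _
    set δ : ℝ := min 1 (ε / (4 * (M + 1))) with hδdef
    have hδ0 : 0 < δ := lt_min one_pos (by positivity)
    have hδ1 : δ ≤ 1 := min_le_left _ _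
    have hδ2 : δ ≤ ε / (4 * (M + 1)) := min_le_right _ _
    haveI : CompactSpace (closedBall (0 : Cn n) (2 * R)) :=
      isCompact_iff_compactSpace.mp (isCompact_closedBall _ _)
    have hVmem : (fun f : C(Cn n, Cn n) => f.restrict (closedBall (0 : Cn n) (2 * R))) ⁻¹'
        (ball (f₀.restrict (closedBall (0 : Cn n) (2 * R))) η) ∈ 𝓝 f₀ :=
      (ContinuousMap.continuous_restrict _).continuousAt.preimage_mem_nhds
        (Metric.ball_mem_nhds _ hη0)
    have hprod : (Set.Ioo (-δ) δ ×ˢ ((fun f : C(Cn n, Cn n) =>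
        f.restrict (closedBall (0 : Cn n) (2 * R))) ⁻¹'
        (ball (f₀.restrict (closedBall (0 : Cn n) (2 * R))) η))) ∈ 𝓝 ((0 : ℝ), f₀) :=
      prod_mem_nhds (Ioo_mem_nhds (neg_lt_zero.mpr hδ0) hδ0) hVmem
    have hev := inter_mem (mem_nhdsWithin_of_mem_nhds hprod)
      (self_mem_nhdsWithin (a := ((0 : ℝ), f₀)) (s := Set.Icc (0 : ℝ) 1 ×ˢ AutSet n))
    filter_upwards [hev] with w hw z hz
    obtain ⟨⟨hwt, hwf⟩, ⟨-, hwf'⟩⟩ := hw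
    have hdf : Differentiable ℂ ⇑w.2 := hwf'.2.1
    have hzR : ‖z‖ ≤ R := hKR z hz
    -- sup bound on the 2R-ball
    have hsub : ∀ u : Cn n, ‖u‖ ≤ 2 * R → ‖w.2 u - f₀ u‖ ≤ η := by
      intro u hu
      have hmem : u ∈ closedBall (0 : Cn n) (2 * R) := by
        simpa [mem_closedBall, dist_zero_right] using hu
      have h1 : dist ((w.2.restrict (closedBall (0 : Cn n) (2 * R))) ⟨u, hmem⟩)
          ((f₀.restrict (closedBall (0 : Cn n) (2 * R))) ⟨u, hmem⟩) ≤
          dist (w.2.restrict (closedBall (0 : Cn n) (2 * R)))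
            (f₀.restrict (closedBall (0 : Cn n) (2 * R))) :=
        ContinuousMap.dist_apply_le_dist _
      have h2 : dist (w.2.restrict (closedBall (0 : Cn n) (2 * R)))
          (f₀.restrict (closedBall (0 : Cn n) (2 * R))) < η := hwf
      have := h1.trans h2.le
      simpa [ContinuousMap.restrict_apply, dist_eq_norm] using this
    have hMf : ∀ u : Cn n, ‖u‖ ≤ 2 * R → ‖w.2 u‖ ≤ M + η := by
      intro u hu
      calc ‖w.2 u‖ = ‖f₀ u + (w.2 u - f₀ u)‖ := by rw [show f₀ u + (w.2 u - f₀ u) = w.2 u by abel]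
        _ ≤ ‖f₀ u‖ + ‖w.2 u - f₀ u‖ := norm_add_le _ _
        _ ≤ M + η := add_le_add (hMb u hu) (hsub u hu)
    -- difference of derivatives
    have hdiffd : ‖fderiv ℂ (⇑w.2) 0 z - fderiv ℂ (⇑f₀) 0 z‖ ≤ η := by
      have hΔ : Differentiable ℂ (fun u : Cn n => w.2 u - f₀ u) := hdf.sub hdf₀
      have hMΔ : ∀ u : Cn n, ‖u‖ ≤ 2 * R → ‖(fun u : Cn n => w.2 u - f₀ u) u‖ ≤ η := hsub
      have hk := (key_est _ hΔ R η hMΔ z hzR 0 (by simp)).2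
      have hfd : fderiv ℂ (fun u : Cn n => w.2 u - f₀ u) 0 =
          fderiv ℂ (⇑w.2) 0 - fderiv ℂ (⇑f₀) 0 := fderiv_sub (hdf 0) (hdf₀ 0)
      rwa [hfd, ContinuousLinearMap.sub_apply] at hk
    by_cases ht : w.1 = 0
    · rw [ht, Hmap_zero]
      have : dist ((DCM f₀) z) ((DCM w.2) z) = ‖fderiv ℂ (⇑w.2) 0 z - fderiv ℂ (⇑f₀) 0 z‖ := by
        rw [dist_eq_norm, norm_sub_rev]; rfl
      rw [this]
      exact lt_of_le_of_lt hdiffd (by nlinarith)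
    · rw [Hmap_apply_ne w.1 ht]
      set s : ℂ := (w.1 : ℂ) with hsdef
      have hsne : s ≠ 0 := Complex.ofReal_ne_zero.mpr ht
      have hsnorm : ‖s‖ = |w.1| := Complex.norm_real w.1 |>.trans (Real.norm_eq_abs _)
      have hsle : ‖s‖ ≤ 1 := by
        rw [hsnorm]
        rcases abs_lt.mpr ⟨hwt.1, hwt.2⟩ with h
        exact le_trans (abs_lt.mpr hwt |>.le) hδ1
      have hsδ : ‖s‖ < δ := by rw [hsnorm]; exact abs_lt.mpr hwt
      obtain ⟨hA, hDb⟩ := key_est (⇑w.2) hdf R (M + η) hMf z hzR s hsle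
      have hf0 : ‖w.2 0‖ ≤ M + η := hMf 0 (by rw [norm_zero]; positivity)
      have hid : s⁻¹ • (w.2 (s • z) - w.2 0) + s • w.2 0 - fderiv ℂ (⇑f₀) 0 z =
          s⁻¹ • (w.2 (s • z) - w.2 0 - s • (fderiv ℂ (⇑w.2) 0 z)) +
          (fderiv ℂ (⇑w.2) 0 z - fderiv ℂ (⇑f₀) 0 z) + s • w.2 0 := by
        have hcancel : s⁻¹ • (s • (fderiv ℂ (⇑w.2) 0 z)) = fderiv ℂ (⇑w.2) 0 z := by
          rw [smul_smul, inv_mul_cancel₀ hsne, one_smul]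
        rw [smul_sub s⁻¹ (w.2 (s • z) - w.2 0) (s • (fderiv ℂ (⇑w.2) 0 z)), hcancel]
        abel
      rw [dist_eq_norm, norm_sub_rev,
        show ((DCM f₀) z : Cn n) = fderiv ℂ (⇑f₀) 0 z from rfl, hid]
      have ha0 : 0 < ‖s‖ := norm_pos_iff.mpr hsne
      have hterm1 : ‖s⁻¹ • (w.2 (s • z) - w.2 0 - s • (fderiv ℂ (⇑w.2) 0 z))‖ ≤
          (M + η) * ‖s‖ := by
        rw [norm_smul, norm_inv]
        calc ‖s‖⁻¹ * ‖w.2 (s • z) - w.2 0 - s • (fderiv ℂ (⇑w.2) 0 z)‖ ≤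
            ‖s‖⁻¹ * ((M + η) * ‖s‖ ^ 2) := by
              apply mul_le_mul_of_nonneg_left hA (by positivity)
          _ = (M + η) * ‖s‖ := by
              rw [sq, show ‖s‖⁻¹ * ((M + η) * (‖s‖ * ‖s‖)) = (M + η) * ‖s‖ * (‖s‖ * ‖s‖⁻¹) by
                ring, mul_inv_cancel₀ ha0.ne', mul_one]
      have hterm3 : ‖s • w.2 0‖ ≤ (M + η) * ‖s‖ := by
        rw [norm_smul]
        calc ‖s‖ * ‖w.2 0‖ ≤ ‖s‖ * (M + η) := mul_le_mul_of_nonneg_left hf0 ha0.le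
          _ = (M + η) * ‖s‖ := mul_comm _ _
      calc ‖s⁻¹ • (w.2 (s • z) - w.2 0 - s • (fderiv ℂ (⇑w.2) 0 z)) +
            (fderiv ℂ (⇑w.2) 0 z - fderiv ℂ (⇑f₀) 0 z) + s • w.2 0‖
          ≤ ‖s⁻¹ • (w.2 (s • z) - w.2 0 - s • (fderiv ℂ (⇑w.2) 0 z)) +
            (fderiv ℂ (⇑w.2) 0 z - fderiv ℂ (⇑f₀) 0 z)‖ + ‖s • w.2 0‖ := norm_add_le _ _
        _ ≤ (‖s⁻¹ • (w.2 (s • z) - w.2 0 - s • (fderiv ℂ (⇑w.2) 0 z))‖ +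
            ‖fderiv ℂ (⇑w.2) 0 z - fderiv ℂ (⇑f₀) 0 z‖) + ‖s • w.2 0‖ :=
            add_le_add_left (norm_add_le _ _) _
        _ ≤ ((M + η) * ‖s‖ + η) + (M + η) * ‖s‖ :=
            add_le_add (add_le_add hterm1 hdiffd) hterm3
        _ < ε := by
            have h1 : (M + η) ≤ M + 1 := by linarith
            have h2 : ‖s‖ < ε / (4 * (M + 1)) := lt_of_lt_of_le hsδ hδ2
            have h3 : (0 : ℝ) < M + 1 := by linarith
            have hq : (M + 1) * (ε / (4 * (M + 1))) = ε / 4 := by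
              field_simp
            have h5 : (M + η) * ‖s‖ ≤ (M + 1) * ‖s‖ := mul_le_mul_of_nonneg_right h1 ha0.le
            have h6 : (M + 1) * ‖s‖ < (M + 1) * (ε / (4 * (M + 1))) :=
              mul_lt_mul_of_pos_left h2 h3
            linarith
  · have hev : (fun w : ℝ × C(Cn n, Cn n) => Hmap n w.1 w.2) =ᶠ[𝓝 (t₀, f₀)] Gmap n := by
      have hopen : IsOpen {w : ℝ × C(Cn n, Cn n) | w.1 ≠ 0} :=
        isOpen_ne.preimage continuous_fst
      filter_upwards [hopen.mem_nhds h0] with w hw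
      rw [Hmap, if_neg hw]; rfl
    exact ((continuousAt_Gmap h0).congr hev.symm).continuousWithinAt
end


end Aux

/-- `GLₙ(ℂ)` is a deformation retract of `Aut(ℂⁿ)` for the compact-open
topology; in particular the inclusion `GLₙ(ℂ) ↪ Aut(ℂⁿ)` is a homotopy equivalence. -/
theorem gl_deformation_retract_of_aut (n : ℕ) (hn : 1 < n) :
    (∃ H : ℝ → C(Cn n, Cn n) → C(Cn n, Cn n),
      ContinuousOn (fun w : ℝ × C(Cn n, Cn n) => H w.1 w.2)
        (Icc (0 : ℝ) 1 ×ˢ AutSet n) ∧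
      (∀ t ∈ Icc (0 : ℝ) 1, ∀ f ∈ AutSet n, H t f ∈ AutSet n) ∧
      (∀ f ∈ AutSet n, H 1 f = f) ∧
      (∀ f ∈ AutSet n, H 0 f ∈ LinAutSet n) ∧
      (∀ f ∈ LinAutSet n, H 0 f = f)) ∧
    ∃ r : C(AutSet n, LinAutSet n),
      ((linAutInclusion n).comp r).Homotopic (ContinuousMap.id _) ∧
      (r.comp (linAutInclusion n)).Homotopic (ContinuousMap.id _) := by
  classical
  have hconts := contH n
  have hmem : ∀ t ∈ Icc (0:ℝ) 1, ∀ f ∈ AutSet n, Hmap n t f ∈ AutSet n := by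
    intro t ht f hf
    by_cases h : t = 0
    · subst h
      exact (Hmap_zero_mem_linAutSet hf).1
    · exact Hmap_mem_autSet h hf
  have hrcont : Continuous fun f : AutSet n => Hmap n 0 (f : C(Cn n, Cn n)) := by
    have h1 : Continuous fun f : AutSet n => ((0:ℝ), (f : C(Cn n, Cn n))) :=
      continuous_const.prodMk continuous_subtype_val
    have := hconts.comp_continuous h1 (fun f => ⟨⟨le_rfl, zero_le_one⟩, f.2⟩)
    exact this
  refine ⟨⟨Hmap n, hconts, hmem, fun f _ => Hmap_one f,
    fun f hf => Hmap_zero_mem_linAutSet hf, fun f hf => Hmap_zero_of_lin hf⟩, ?_⟩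
  set r : C(AutSet n, LinAutSet n) :=
    ⟨fun f => ⟨Hmap n 0 f.1, Hmap_zero_mem_linAutSet f.2⟩, hrcont.subtype_mk _⟩ with hrdef
  refine ⟨r, ?_, ?_⟩
  · -- incl ∘ r homotopic to id
    have hFc : Continuous fun p : unitInterval × AutSet n =>
        Hmap n (p.1 : ℝ) (p.2 : C(Cn n, Cn n)) := by
      have h1 : Continuous fun p : unitInterval × AutSet n =>
          (((p.1 : ℝ), (p.2 : C(Cn n, Cn n))) : ℝ × C(Cn n, Cn n)) :=
        (continuous_subtype_val.comp continuous_fst).prodMk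
          (continuous_subtype_val.comp continuous_snd)
      exact hconts.comp_continuous h1 (fun p => ⟨p.1.2, p.2.2⟩)
    refine ⟨⟨⟨fun p => ⟨Hmap n (p.1 : ℝ) (p.2 : C(Cn n, Cn n)), hmem _ p.1.2 _ p.2.2⟩,
      hFc.subtype_mk _⟩, ?_, ?_⟩⟩
    · intro f
      exact Subtype.ext rfl
    · intro f
      exact Subtype.ext (Hmap_one (f : C(Cn n, Cn n)))
  · -- r ∘ incl = id
    have heq : r.comp (linAutInclusion n) = ContinuousMap.id (LinAutSet n) :=
      ContinuousMap.ext fun f => Subtype.ext (Hmap_zero_of_lin f.2)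
    rw [heq]


end
end

section
/- Let n > 1 and let (a_j)_{j∈ℕ} be a tame sequence of points in ℂⁿ. Then for every bijection σ : ℕ → ℕ the reordered sequence (a_{σ(j)})_{j∈ℕ} is also tame; i.e., tameness of a discrete sequence of distinct points does not depend on the ordering of the points. -/
open scoped Topology
open Asymptotics Set Filter

noncomputable section

/-! ### Auxiliary material: entire interpolation and shears -/

section Aux

open Complex Metric

/-- The entire function `sin z / z`. -/
def sinc : ℂ → ℂ := dslope Complex.sin 0

lemma sinc_zero : sinc 0 = 1 := by
  simp [sinc, dslope_same, Complex.deriv_sin]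

lemma sinc_ne {w : ℂ} (hw : w ≠ 0) : sinc w = Complex.sin w / w := by
  rw [sinc, dslope_of_ne _ hw, slope_def_field]
  simp [div_eq_mul_inv]

lemma differentiable_sinc : Differentiable ℂ sinc := by
  intro w
  by_cases hw : w = 0
  · subst hw
    have h : AnalyticAt ℂ Complex.sin 0 := Complex.differentiable_sin.analyticAt 0
    obtain ⟨p, hp⟩ := h
    exact (hp.has_fpower_series_dslope_fslope).analyticAt.differentiableAt
  · exact (differentiableAt_dslope_of_ne hw).2 (Complex.differentiable_sin w)

lemma abs_sin_le (w : ℂ) : ‖Complex.sin w‖ ≤ Real.exp |w.im| := by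
  rw [Complex.sin]
  have h1 : ‖Complex.exp (-w * I)‖ = Real.exp w.im := by
    rw [Complex.norm_exp]; congr 1; simp [Complex.mul_re]
  have h2 : ‖Complex.exp (w * I)‖ = Real.exp (-w.im) := by
    rw [Complex.norm_exp]; congr 1; simp [Complex.mul_re]
  have hle : ‖Complex.exp (-w * I) - Complex.exp (w * I)‖
      ≤ Real.exp w.im + Real.exp (-w.im) := by
    calc ‖Complex.exp (-w * I) - Complex.exp (w * I)‖
        ≤ ‖Complex.exp (-w * I)‖ + ‖Complex.exp (w * I)‖ :=
          norm_sub_le _ _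
      _ = Real.exp w.im + Real.exp (-w.im) := by rw [h1, h2]
  have e1 := Real.exp_le_exp.2 (le_abs_self w.im)
  have e2 := Real.exp_le_exp.2 (neg_le_abs w.im)
  calc ‖(Complex.exp (-w * I) - Complex.exp (w * I)) * I / 2‖
      = ‖Complex.exp (-w * I) - Complex.exp (w * I)‖ / 2 := by
        rw [norm_div, norm_mul, Complex.norm_I, mul_one, Complex.norm_two]
    _ ≤ (Real.exp w.im + Real.exp (-w.im)) / 2 := by linarith
    _ ≤ Real.exp |w.im| := by linarith

lemma sinc_int_sub {i j : ℕ} (hij : i ≠ j) : sinc (Real.pi * ((i:ℂ) - j)) = 0 := by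
  have hd : ((i:ℂ) - j) ≠ 0 := by
    intro h
    exact hij (by exact_mod_cast sub_eq_zero.mp h)
  have hw : (Real.pi : ℂ) * ((i:ℂ) - j) ≠ 0 :=
    mul_ne_zero (by exact_mod_cast Real.pi_ne_zero) hd
  rw [sinc_ne hw]
  have h : Complex.sin ((Real.pi:ℂ) * ((i:ℂ) - j)) = 0 := by
    have hcast : ((i:ℂ) - j) = ((i:ℤ) - (j:ℤ) : ℤ) := by push_cast; ring
    rw [hcast, mul_comm]
    exact Complex.sin_int_mul_pi _
  rw [h, zero_div]

/-- Damping exponents for the interpolation series. -/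
def itpB (v : ℕ → ℂ) (j : ℕ) : ℝ :=
  2 * (2 * Real.log (‖v j‖ + 1) + ((j : ℝ) + 1)) / ((j : ℝ) + 1)

/-- The `j`-th term of the interpolation series. -/
def itpTerm (v : ℕ → ℂ) (j : ℕ) (z : ℂ) : ℂ :=
  v j * Complex.exp ((itpB v j : ℂ) * (z - ((j:ℂ) + 1))) * sinc (Real.pi * (z - ((j:ℂ) + 1)))

lemma itpB_nonneg (v : ℕ → ℂ) (j : ℕ) : 0 ≤ itpB v j := by
  have hL : 0 ≤ Real.log (‖v j‖ + 1) :=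
    Real.log_nonneg (by nlinarith [norm_nonneg (v j)])
  have h : (0:ℝ) < (j:ℝ) + 1 := by positivity
  apply div_nonneg _ h.le
  positivity

lemma itpTerm_differentiable (v : ℕ → ℂ) (j : ℕ) : Differentiable ℂ (itpTerm v j) := by
  apply Differentiable.mul
  · apply Differentiable.mul (differentiable_const _)
    apply Complex.differentiable_exp.comp
    exact (differentiable_id.sub_const _).const_mul _
  · exact differentiable_sinc.comp ((differentiable_id.sub_const _).const_mul _)

lemma itpTerm_self (v : ℕ → ℂ) (j : ℕ) : itpTerm v j ((j:ℂ) + 1) = v j := by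
  simp [itpTerm, sinc_zero]

lemma itpTerm_other (v : ℕ → ℂ) {i j : ℕ} (hij : i ≠ j) : itpTerm v j ((i:ℂ) + 1) = 0 := by
  have h : ((i:ℂ) + 1) - ((j:ℂ) + 1) = (i:ℂ) - j := by ring
  simp [itpTerm, h, sinc_int_sub hij]

lemma itpTerm_bound (v : ℕ → ℂ) {R : ℝ} (hR : 1 ≤ R) {j : ℕ} (hj : 2*R + 1 ≤ (j:ℝ))
    {z : ℂ} (hz : ‖z‖ ≤ R) :
    ‖itpTerm v j z‖ ≤ Real.exp (Real.pi * R) * Real.exp (-(j:ℝ)) := by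
  set c : ℝ := (j:ℝ) + 1 with hc
  set L : ℝ := Real.log (‖v j‖ + 1) with hLdef
  have hL : 0 ≤ L := Real.log_nonneg (by nlinarith [norm_nonneg (v j)])
  have hvnn : (0:ℝ) ≤ ‖v j‖ := norm_nonneg _
  have hvpos : (0:ℝ) < ‖v j‖ + 1 := by positivity
  have hexpL : Real.exp L = ‖v j‖ + 1 := Real.exp_log hvpos
  have hcpos : (0:ℝ) < c := by positivity
  have h2Rc : 2*R ≤ c := by simp only [hc]; linarith
  have hcast : ((j:ℂ) + 1) = ((c:ℝ) : ℂ) := by simp only [hc]; norm_cast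
  have hpi := Real.pi_gt_three
  have hre : ((itpB v j : ℂ) * (z - ((j:ℂ) + 1))).re = itpB v j * (z.re - c) := by
    rw [hcast]
    simp [Complex.mul_re, Complex.sub_re, Complex.ofReal_re, Complex.ofReal_im]
  have hzre : z.re ≤ R := (Complex.re_le_norm z).trans hz
  have hBc : itpB v j * (c/2) = 2*L + c := by
    rw [itpB, ← hLdef, ← hc]
    field_simp
  have hre_le : ((itpB v j : ℂ) * (z - ((j:ℂ) + 1))).re ≤ -(2*L + c) := by
    rw [hre, ← hBc]
    have h1 : z.re - c ≤ -(c/2) := by linarith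
    nlinarith [itpB_nonneg v j]
  have hexp_le : ‖Complex.exp ((itpB v j : ℂ) * (z - ((j:ℂ) + 1)))‖
      ≤ Real.exp (-(2*L + c)) := by
    rw [Complex.norm_exp]
    exact Real.exp_le_exp.2 hre_le
  have hzc : c - R ≤ ‖z - ((j:ℂ) + 1)‖ := by
    rw [hcast, norm_sub_rev]
    calc c - R = ‖((c:ℝ):ℂ)‖ - R := by
            rw [Complex.norm_real, Real.norm_eq_abs, abs_of_pos hcpos]
      _ ≤ ‖((c:ℝ):ℂ)‖ - ‖z‖ := by linarith
      _ ≤ ‖((c:ℝ):ℂ) - z‖ := by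
            have h := norm_sub_norm_le (((c:ℝ):ℂ)) z
            simpa using h
  have hw_ne : (Real.pi : ℂ) * (z - ((j:ℂ) + 1)) ≠ 0 := by
    apply mul_ne_zero
    · exact_mod_cast Real.pi_ne_zero
    · intro h0
      rw [h0] at hzc
      simp at hzc
      linarith
  have hwabs : 1 ≤ ‖(Real.pi : ℂ) * (z - ((j:ℂ) + 1))‖ := by
    rw [norm_mul]
    have h1 : ‖(Real.pi : ℂ)‖ = Real.pi := by
      rw [Complex.norm_real, Real.norm_eq_abs, abs_of_pos Real.pi_pos]
    rw [h1]
    nlinarith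
  have hwim : |((Real.pi : ℂ) * (z - ((j:ℂ) + 1))).im| ≤ Real.pi * R := by
    have him : ((Real.pi : ℂ) * (z - ((j:ℂ) + 1))).im = Real.pi * z.im := by
      rw [hcast]
      simp [Complex.mul_im, Complex.sub_im, Complex.ofReal_im, Complex.ofReal_re]
    rw [him, abs_mul, abs_of_pos Real.pi_pos]
    have h := Complex.abs_im_le_norm z
    nlinarith
  have hsinc_le : ‖sinc ((Real.pi : ℂ) * (z - ((j:ℂ) + 1)))‖
      ≤ Real.exp (Real.pi * R) := by
    rw [sinc_ne hw_ne, norm_div]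
    calc ‖Complex.sin _‖ / ‖(Real.pi:ℂ) * (z - ((j:ℂ)+1))‖
        ≤ Real.exp (Real.pi * R) / 1 := by
          apply div_le_div₀ (Real.exp_pos _).le _ one_pos hwabs
          exact (abs_sin_le _).trans (Real.exp_le_exp.2 hwim)
      _ = Real.exp (Real.pi * R) := div_one _
  have hnorm : ‖itpTerm v j z‖ = ‖v j‖
      * ‖Complex.exp ((itpB v j : ℂ) * (z - ((j:ℂ) + 1)))‖
      * ‖sinc ((Real.pi:ℂ) * (z - ((j:ℂ) + 1)))‖ := by
    rw [itpTerm, norm_mul, norm_mul]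
  rw [hnorm]
  have step1 : ‖v j‖
      * ‖Complex.exp ((itpB v j : ℂ) * (z - ((j:ℂ) + 1)))‖
      * ‖sinc ((Real.pi:ℂ) * (z - ((j:ℂ) + 1)))‖
      ≤ ‖v j‖ * Real.exp (-(2*L + c)) * Real.exp (Real.pi * R) := by
    gcongr
  refine step1.trans ?_
  have hsplit : Real.exp (-(2*L + c)) = Real.exp (-(2*L)) * Real.exp (-c) := by
    rw [← Real.exp_add]; ring_nf
  have hv2 : ‖v j‖ * Real.exp (-(2*L)) ≤ 1 := by
    have h2 : Real.exp (-(2*L)) = ((‖v j‖ + 1)^2)⁻¹ := by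
      rw [show -(2*L) = -(L + L) by ring, Real.exp_neg, Real.exp_add, hexpL]
      ring_nf
    rw [h2, inv_eq_one_div, mul_one_div, div_le_one (by positivity)]
    nlinarith
  have hcj : Real.exp (-c) ≤ Real.exp (-(j:ℝ)) :=
    Real.exp_le_exp.2 (by simp only [hc]; linarith)
  calc ‖v j‖ * Real.exp (-(2*L + c)) * Real.exp (Real.pi * R)
      = (‖v j‖ * Real.exp (-(2*L))) * (Real.exp (-c) * Real.exp (Real.pi * R)) := by
        rw [hsplit]; ring
    _ ≤ 1 * (Real.exp (-(j:ℝ)) * Real.exp (Real.pi * R)) := by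
        have h3 : Real.exp (-c) * Real.exp (Real.pi*R)
            ≤ Real.exp (-(j:ℝ)) * Real.exp (Real.pi*R) := by gcongr
        have h4 : (0:ℝ) ≤ Real.exp (-c) * Real.exp (Real.pi*R) := by positivity
        exact mul_le_mul hv2 h3 h4 (by norm_num)
    _ = Real.exp (Real.pi * R) * Real.exp (-(j:ℝ)) := by ring

set_option maxHeartbeats 1000000 in
/-- Entire interpolation: there is an entire function with prescribed values at `1, 2, 3, …`. -/
lemma entire_interp (v : ℕ → ℂ) :
    ∃ f : ℂ → ℂ, Differentiable ℂ f ∧ ∀ j : ℕ, f ((j:ℂ) + 1) = v j := by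
  classical
  refine ⟨fun z => ∑' j, itpTerm v j z, ?_, ?_⟩
  · intro z0
    set R : ℝ := max 1 (‖z0‖ + 1) with hRdef
    have hR1 : 1 ≤ R := le_max_left _ _
    have hz0R : ‖z0‖ < R :=
      lt_of_lt_of_le (by linarith [norm_nonneg z0]) (le_max_right _ _)
    set N : ℕ := ⌈2*R + 1⌉₊ with hN
    set u : ℕ → ℝ := fun j => sSup ((fun z => ‖itpTerm v j z‖) '' closedBall (0:ℂ) R) with hu
    have hne : ∀ j : ℕ, ((fun z => ‖itpTerm v j z‖) '' closedBall (0:ℂ) R).Nonempty := by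
      intro j
      exact (Set.Nonempty.image _ ⟨0, mem_closedBall_self (by linarith)⟩)
    have hbdd : ∀ j : ℕ, BddAbove ((fun z => ‖itpTerm v j z‖) '' closedBall (0:ℂ) R) := by
      intro j
      exact (isCompact_closedBall 0 R).bddAbove_image
        ((itpTerm_differentiable v j).continuous.norm.continuousOn)
    have hle : ∀ j : ℕ, ∀ z ∈ ball (0:ℂ) R, ‖itpTerm v j z‖ ≤ u j := by
      intro j z hz
      exact le_csSup (hbdd j) ⟨z, ball_subset_closedBall hz, rfl⟩
    have hu0 : ∀ j : ℕ, 0 ≤ u j := by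
      intro j
      exact le_trans (norm_nonneg (itpTerm v j 0))
        (le_csSup (hbdd j) ⟨0, mem_closedBall_self (by linarith), rfl⟩)
    have htail : ∀ j : ℕ, N ≤ j → u j ≤ Real.exp (Real.pi * R) * Real.exp (-(j:ℝ)) := by
      intro j hj
      apply csSup_le (hne j)
      rintro x ⟨z, hzball, rfl⟩
      have hjR : 2*R + 1 ≤ (j:ℝ) := by
        calc 2*R+1 ≤ (N:ℝ) := Nat.le_ceil _
          _ ≤ (j:ℝ) := by exact_mod_cast hj
      have hzR : ‖z‖ ≤ R := by simpa using mem_closedBall_iff_norm.mp hzball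
      exact itpTerm_bound v hR1 hjR hzR
    have hsum : Summable u := by
      rw [← summable_nat_add_iff N]
      refine Summable.of_nonneg_of_le
        (f := fun j => (Real.exp (Real.pi * R) * Real.exp (-(N:ℝ))) * Real.exp (-1) ^ j)
        (fun j => hu0 (j + N)) ?_ ?_
      · intro j
        have h1 := htail (j + N) (Nat.le_add_left _ _)
        have h2 : Real.exp (-((j:ℝ) + (N:ℝ))) = Real.exp (-(N:ℝ)) * Real.exp (-1) ^ j := by
          rw [← Real.exp_nat_mul, ← Real.exp_add]
          ring_nf
        calc u (j + N) ≤ Real.exp (Real.pi * R) * Real.exp (-((j:ℝ) + (N:ℝ))) := by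
              push_cast at h1 ⊢; linarith [h1]
          _ = Real.exp (Real.pi * R) * Real.exp (-(N:ℝ)) * Real.exp (-1) ^ j := by
              rw [h2]; ring
      · apply Summable.mul_left
        apply summable_geometric_of_lt_one (Real.exp_pos _).le
        exact Real.exp_lt_one_iff.mpr (by norm_num)
    have hdiff : DifferentiableOn ℂ (fun z => ∑' j, itpTerm v j z) (ball (0:ℂ) R) := by
      apply differentiableOn_tsum_of_summable_norm hsum
        (fun j => (itpTerm_differentiable v j).differentiableOn) isOpen_ball
      intro j w hw
      exact hle j w hw
    have hmem : z0 ∈ ball (0:ℂ) R := by simpa [mem_ball_iff_norm] using hz0R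
    exact (hdiff.differentiableAt (isOpen_ball.mem_nhds hmem))
  · intro j
    show (∑' i : ℕ, itpTerm v i ((j:ℂ) + 1)) = v j
    exact (tsum_eq_single j fun i hij => itpTerm_other v hij.symm).trans (itpTerm_self v j)

/-- The shear of `ℂⁿ` adding `f` of the `i`-th coordinate to the `j`-th coordinate. -/
def shear {n : ℕ} (i j : Fin n) (f : ℂ → ℂ) (z : Cn n) : Cn n :=
  WithLp.toLp 2 (fun k => if k = j then z j + f (z i) else z k)

lemma differentiable_shear {n : ℕ} (i j : Fin n) {f : ℂ → ℂ} (hf : Differentiable ℂ f) :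
    Differentiable ℂ (shear i j f) := by
  classical
  have heq : shear i j f = ⇑(EuclideanSpace.equiv (Fin n) ℂ).symm ∘
      (fun w : Fin n → ℂ => fun k => if k = j then w j + f (w i) else w k) ∘
      ⇑(EuclideanSpace.equiv (Fin n) ℂ) := rfl
  rw [heq]
  apply ((EuclideanSpace.equiv (Fin n) ℂ).symm.differentiable).comp
  apply Differentiable.comp ?_ ((EuclideanSpace.equiv (Fin n) ℂ).differentiable)
  rw [differentiable_pi]
  intro k
  by_cases hk : k = j
  · simp only [hk, if_pos rfl]
    exact ((ContinuousLinearMap.proj j : (∀ _ : Fin n, ℂ) →L[ℂ] ℂ).differentiable).add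
      (hf.comp (ContinuousLinearMap.proj i : (∀ _ : Fin n, ℂ) →L[ℂ] ℂ).differentiable)
  · simp only [if_neg hk]
    exact (ContinuousLinearMap.proj k : (∀ _ : Fin n, ℂ) →L[ℂ] ℂ).differentiable

lemma shear_shear {n : ℕ} {i j : Fin n} (hij : i ≠ j) (f g : ℂ → ℂ) (z : Cn n) :
    shear i j g (shear i j f z) = WithLp.toLp 2 (fun k => if k = j then z j + (f (z i) + g (z i)) else z k) := by
  ext k
  show (if k = j then (shear i j f z) j + g ((shear i j f z) i) else (shear i j f z) k) = _
  have hzi : (shear i j f z) i = z i := by simp [shear, hij]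
  have hzj : (shear i j f z) j = z j + f (z i) := by simp [shear]
  by_cases hk : k = j
  · simp [hk, hzi, hzj, add_assoc]
  · simp [shear, hk]

lemma isAutCn_shear {n : ℕ} {i j : Fin n} (hij : i ≠ j) {f : ℂ → ℂ}
    (hf : Differentiable ℂ f) : IsAutCn (shear i j f) := by
  set g := shear i j (fun w => -(f w)) with hg
  have hid : ∀ (u v : ℂ → ℂ), (∀ w, u w + v w = 0) →
      ∀ z, shear i j v (shear i j u z) = z := by
    intro u v huv z
    rw [shear_shear hij]
    ext k
    by_cases hk : k = j
    · subst hk; simp [huv (z i)]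
    · simp [hk]
  have h1 : Function.LeftInverse g (shear i j f) := fun z => hid f _ (fun w => by ring) z
  have h2 : Function.RightInverse g (shear i j f) := fun z => hid _ f (fun w => by ring) z
  exact ⟨Function.bijective_iff_has_inverse.mpr ⟨g, h1, h2⟩,
    differentiable_shear i j hf,
    g, differentiable_shear i j (hf.neg), h1, h2⟩

lemma IsAutCn.comp {n : ℕ} {f g : Cn n → Cn n} (hg : IsAutCn g) (hf : IsAutCn f) :
    IsAutCn (g ∘ f) := by
  obtain ⟨hgb, hgd, g', hg'd, hg'l, hg'r⟩ := hg
  obtain ⟨hfb, hfd, f', hf'd, hf'l, hf'r⟩ := hf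
  exact ⟨hgb.comp hfb, hgd.comp hfd, f' ∘ g', hf'd.comp hg'd,
    fun z => by simp [Function.comp, hg'l (f z), hf'l z],
    fun z => by simp [Function.comp, hf'r (g' z), hg'r z]⟩

end Aux

/-- tameness of a sequence does not depend on the ordering of its points:
if `(a_j)` is tame and `σ : ℕ → ℕ` is a bijection, then `(a_{σ(j)})` is tame. -/
theorem tame_invariant_under_reordering
    {n : ℕ} (hn : 1 < n) (a : ℕ → Cn n) (σ : ℕ → ℕ) (hσ : Function.Bijective σ)
    (ha : TameSeq a) :
    TameSeq fun j => a (σ j) := by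
  obtain ⟨m, rfl⟩ : ∃ m, n = m + 2 := ⟨n - 2, by omega⟩
  obtain ⟨F, hF, hFa⟩ := ha
  set e := Equiv.ofBijective σ hσ with he
  obtain ⟨f₁, hf₁d, hf₁⟩ := entire_interp (fun k => ((e.symm k : ℕ) : ℂ) - k)
  obtain ⟨f₂, hf₂d, hf₂⟩ := entire_interp (fun j => ((σ j : ℕ) : ℂ) - j)
  have h01 : (0 : Fin (m+2)) ≠ 1 := Fin.ne_of_val_ne (by simp)
  have h10 : (1 : Fin (m+2)) ≠ 0 := Fin.ne_of_val_ne (by simp)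
  refine ⟨shear 0 1 f₂ ∘ shear 1 0 id ∘ shear (0 : Fin (m+2)) 1 f₁ ∘ F,
    (isAutCn_shear h01 hf₂d).comp ((isAutCn_shear h10 differentiable_id).comp
      ((isAutCn_shear h01 hf₁d).comp hF)), ?_⟩
  intro j
  show shear 0 1 f₂ (shear 1 0 id (shear (0 : Fin (m+2)) 1 f₁ (F (a (σ j)))))
      = axisPt (m+2) ((j:ℂ) + 1)
  rw [hFa (σ j)]
  set p := axisPt (m+2) ((σ j : ℂ) + 1) with hp
  have hp0 : p 0 = (σ j : ℂ) + 1 := by simp [hp, axisPt]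
  have hp1 : p 1 = 0 := by simp [hp, axisPt]
  have hf1val : f₁ ((σ j : ℂ) + 1) = (j : ℂ) - (σ j : ℂ) := by
    have h := hf₁ (σ j)
    have hsymm : e.symm (σ j) = j := by
      have : σ j = e j := rfl
      rw [this, Equiv.symm_apply_apply]
    rwa [hsymm] at h
  have hQ0 : shear (0 : Fin (m+2)) 1 f₁ p 0 = (σ j : ℂ) + 1 := by
    simp [shear, h01, hp0]
  have hQ1 : shear (0 : Fin (m+2)) 1 f₁ p 1 = (j : ℂ) - (σ j : ℂ) := by
    simp [shear, hp1, hp0, hf1val]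
  have hR0 : shear 1 0 id (shear (0 : Fin (m+2)) 1 f₁ p) 0 = (j:ℂ) + 1 := by
    show (if (0 : Fin (m+2)) = 0 then _ + id _ else shear (0 : Fin (m+2)) 1 f₁ p 0) = _
    rw [if_pos rfl, hQ0, hQ1]
    simp
    ring
  have hR1 : shear 1 0 id (shear (0 : Fin (m+2)) 1 f₁ p) 1 = (j : ℂ) - (σ j : ℂ) := by
    show (if (1 : Fin (m+2)) = 0 then shear (0 : Fin (m+2)) 1 f₁ p 0 + id (shear (0 : Fin (m+2)) 1 f₁ p 1) else shear (0 : Fin (m+2)) 1 f₁ p 1) = _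
    rw [if_neg h10, hQ1]
  ext k
  show (if k = 1 then shear 1 0 id (shear (0 : Fin (m+2)) 1 f₁ p) 1
        + f₂ (shear 1 0 id (shear (0 : Fin (m+2)) 1 f₁ p) 0)
      else shear 1 0 id (shear (0 : Fin (m+2)) 1 f₁ p) k) = axisPt (m+2) ((j:ℂ)+1) k
  by_cases hk1 : k = 1
  · subst hk1
    rw [if_pos rfl, hR1, hR0, hf₂ j]
    simp [axisPt]
  · rw [if_neg hk1]
    by_cases hk0 : k = 0
    · subst hk0
      rw [hR0]
      simp [axisPt]
    · have hkk : shear 1 0 id (shear (0 : Fin (m+2)) 1 f₁ p) k = p k := by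
        simp [shear, hk0, hk1]
      rw [hkk]
      have hkval : ((k : Fin (m+2)) : ℕ) ≠ 0 := by
        intro h
        exact hk0 (Fin.ext (by simpa using h))
      simp [hp, axisPt, hkval, hk0]

end
end

section
/- Let n > 1, let λ : ℂⁿ → ℂ be a nonzero complex linear form, let v ∈ ℂⁿ be a vector with λ(v) = 0 and ⟨v, v⟩ = 1 (where ⟨z,w⟩ = Σ z_j \overline{w_j}), and let f : ℂ → ℂ be an entire function. Then the overshear map R(z) = z + (e^{f(λ(z))} − 1) ⟨z, v⟩ v is a holomorphic automorphism of ℂⁿ whose Jacobian determinant at any point z ∈ ℂⁿ equals e^{f(λ(z))}. -/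
open scoped Topology
open Asymptotics Set Filter

noncomputable section

set_option maxHeartbeats 1000000 in
/-- for a nonzero linear form `λ : ℂⁿ → ℂ`, a unit vector `v` with
`λ(v) = 0` and `⟨v,v⟩ = 1`, and an entire function `f : ℂ → ℂ`, the overshear
`R(z) = z + (e^{f(λ(z))} − 1)⟨z,v⟩v` is a holomorphic automorphism of `ℂⁿ` whose Jacobian
determinant at `z` equals `e^{f(λ(z))}`.  (Here `⟨z,w⟩ = ∑ z_j conj(w_j)`, which in Mathlib's
convention — conjugate-linear in the first variable — is `inner ℂ v z` for `⟨z,v⟩`.) -/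
theorem overshear_is_automorphism
    {n : ℕ} (hn : 1 < n) (lam : Cn n →ₗ[ℂ] ℂ) (hlam : lam ≠ 0)
    (v : Cn n) (hv : lam v = 0) (hvv : (inner ℂ v v : ℂ) = 1)
    (f : ℂ → ℂ) (hf : Differentiable ℂ f) :
    IsAutCn (fun z : Cn n =>
      z + (Complex.exp (f (lam z)) - 1) • (inner ℂ v z : ℂ) • v) ∧
    ∀ z : Cn n,
      jacDet (fun w : Cn n =>
        w + (Complex.exp (f (lam w)) - 1) • (inner ℂ v w : ℂ) • v) z
      = Complex.exp (f (lam z)) := by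
  classical
  show _ ∧ _
  set T : (ℂ → ℂ) → Cn n → Cn n := fun g z =>
    z + (Complex.exp (g (lam z)) - 1) • (inner ℂ v z : ℂ) • v with hT
  have hlamT : ∀ (g : ℂ → ℂ) (z : Cn n), lam (T g z) = lam z := by
    intro g z
    simp [T, map_add, map_smul, hv, smul_eq_mul]
  have hinnT : ∀ (g : ℂ → ℂ) (z : Cn n),
      (inner ℂ v (T g z) : ℂ) = Complex.exp (g (lam z)) * inner ℂ v z := by
    intro g z
    simp only [T, inner_add_right, inner_smul_right, hvv, mul_one]
    ring
  have hcomp : ∀ (g h : ℂ → ℂ) (z : Cn n),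
      T g (T h z) = T (fun w => g w + h w) z := by
    intro g h z
    have h1 := hlamT h z
    have h2 := hinnT h z
    simp only [T, h1, h2] at *
    rw [smul_smul, smul_smul, smul_smul, add_assoc, ← add_smul]
    congr 1
    rw [Complex.exp_add]
    ring
  have hid : ∀ (g : ℂ → ℂ), (∀ w, g w = 0) → ∀ z : Cn n, T g z = z := by
    intro g hg z
    simp [T, hg]
  -- differentiability of T g for differentiable g
  have hlamd : Differentiable ℂ (fun z : Cn n => lam z) := by
    have := (LinearMap.toContinuousLinearMap lam).differentiable
    simpa using this
  have hinnd : Differentiable ℂ (fun z : Cn n => (inner ℂ v z : ℂ)) := by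
    have := (innerSL ℂ v).differentiable
    simpa using this
  have hdiff : ∀ g : ℂ → ℂ, Differentiable ℂ g → Differentiable ℂ (T g) := by
    intro g hg
    apply differentiable_id.add
    exact (((hg.comp hlamd).cexp.sub_const 1)).smul (hinnd.smul_const v)
  have hRT : (fun z : Cn n =>
      z + (Complex.exp (f (lam z)) - 1) • (inner ℂ v z : ℂ) • v) = T f := rfl
  have hTeq : T f = fun w : Cn n =>
      w + ((Complex.exp (f (lam w)) - 1) * (inner ℂ v w : ℂ)) • v := by
    funext w
    rw [hT]
    simp [smul_smul]
  clear_value T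
  rw [hRT]
  constructor
  · refine ⟨?_, ?_, T (fun w => -(f w)), ?_, ?_, ?_⟩
    · refine Function.bijective_iff_has_inverse.2 ⟨T (fun w => -(f w)), ?_, ?_⟩
      · intro z
        exact (hcomp _ _ z).trans (hid _ (fun w => by ring) z)
      · intro z
        exact (hcomp _ _ z).trans (hid _ (fun w => by ring) z)
    · exact hdiff f hf
    · exact hdiff _ hf.neg
    · intro z
      exact (hcomp _ _ z).trans (hid _ (fun w => by ring) z)
    · intro z
      exact (hcomp _ _ z).trans (hid _ (fun w => by ring) z)
  · intro z
    -- set up constants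
    set c : ℂ := Complex.exp (f (lam z)) with hc
    set f' : ℂ := deriv f (lam z) with hf'
    set lamL : Cn n →L[ℂ] ℂ := LinearMap.toContinuousLinearMap lam with hlamL
    set L : Cn n →L[ℂ] ℂ :=
      (c - 1) • (innerSL ℂ v) + (inner ℂ v z : ℂ) • ((c * f') • lamL) with hL
    -- derivative of T f at z
    have hlamfd : HasFDerivAt (fun w : Cn n => lam w) lamL z := by
      exact lamL.hasFDerivAt (x := z)
    have hexp : HasDerivAt (fun w : ℂ => Complex.exp (f w)) (c * f') (lam z) :=
      (hf (lam z)).hasDerivAt.cexp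
    have hcd : HasFDerivAt (fun w : Cn n => Complex.exp (f (lam w)))
        ((c * f') • lamL) z := hexp.comp_hasFDerivAt z hlamfd
    have hu : HasFDerivAt (fun w : Cn n => Complex.exp (f (lam w)) - 1)
        ((c * f') • lamL) z := hcd.sub_const 1
    have hw : HasFDerivAt (fun w : Cn n => (inner ℂ v w : ℂ)) (innerSL ℂ v) z := by
      simpa using (innerSL ℂ v).hasFDerivAt (x := z)
    have hphi : HasFDerivAt
        (fun w : Cn n => (Complex.exp (f (lam w)) - 1) * (inner ℂ v w : ℂ)) L z := by
      exact hu.mul hw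
    have hR : HasFDerivAt (T f)
        (ContinuousLinearMap.id ℂ (Cn n) + L.smulRight v) z := by
      rw [hTeq]
      exact (hasFDerivAt_id z).add (hphi.smul_const v)
    have hfd : fderiv ℂ (T f) z = ContinuousLinearMap.id ℂ (Cn n) + L.smulRight v :=
      hR.fderiv
    -- the Jacobian matrix is a rank one perturbation of the identity
    have hmat : jacMatrix (T f) z
        = 1 + Matrix.replicateCol (Fin 1) (fun i => v i) *
            Matrix.replicateRow (Fin 1) (fun j => L (EuclideanSpace.single j 1)) := by
      ext i j
      simp only [jacMatrix, hfd, ContinuousLinearMap.add_apply,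
        ContinuousLinearMap.id_apply, ContinuousLinearMap.smulRight_apply,
        Matrix.add_apply, Matrix.mul_apply, Matrix.replicateCol_apply, Matrix.replicateRow_apply,
        Finset.univ_unique, Finset.sum_singleton]
      have h1 : (EuclideanSpace.single j (1:ℂ) + L (EuclideanSpace.single j 1) • v) i
          = EuclideanSpace.single j (1:ℂ) i + L (EuclideanSpace.single j 1) * v i := rfl
      rw [h1, EuclideanSpace.single_apply, Matrix.one_apply]
      by_cases hij : i = j <;> simp [hij, eq_comm, mul_comm]
    -- compute the determinant
    rw [jacDet, hmat]
    refine (Matrix.det_one_add_replicateCol_mul_replicateRow (ι := Fin 1) _ _).trans ?_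
    -- evaluate the dot product
    have hsingle : ∀ j : Fin n, L (EuclideanSpace.single j 1)
        = (c - 1) * (starRingEnd ℂ) (v j) + (inner ℂ v z : ℂ) * ((c * f') * lam (EuclideanSpace.single j 1)) := by
      intro j
      have hlamL' : lamL (EuclideanSpace.single j 1) = lam (EuclideanSpace.single j 1) := by
        rw [hlamL]; simp
      simp [hL, EuclideanSpace.inner_single_right, smul_eq_mul, hlamL']
      try ring
    have hdecomp : ∑ j : Fin n, v j • EuclideanSpace.single j (1:ℂ) = v := by
      have := (EuclideanSpace.basisFun (Fin n) ℂ).sum_repr v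
      simpa [EuclideanSpace.basisFun_apply, EuclideanSpace.basisFun_repr] using this
    have hlamv : ∑ j : Fin n, lam (EuclideanSpace.single j (1:ℂ)) * v j = 0 := by
      have : lam (∑ j : Fin n, v j • EuclideanSpace.single j (1:ℂ)) = 0 := by
        rw [hdecomp]; exact hv
      rw [map_sum] at this
      simpa [map_smul, smul_eq_mul, mul_comm] using this
    have hinnv : ∑ j : Fin n, (starRingEnd ℂ) (v j) * v j = 1 := by
      have : (inner ℂ v v : ℂ) = ∑ j : Fin n, (starRingEnd ℂ) (v j) * v j := by
        rw [PiLp.inner_apply]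
        exact Finset.sum_congr rfl fun j _ => by rw [RCLike.inner_apply]; ring
      rw [← this, hvv]
    rw [dotProduct]
    have : ∑ j : Fin n, L (EuclideanSpace.single j 1) * v j
        = (c - 1) * (∑ j : Fin n, (starRingEnd ℂ) (v j) * v j)
          + ((inner ℂ v z : ℂ) * (c * f')) * (∑ j : Fin n, lam (EuclideanSpace.single j (1:ℂ)) * v j) := by
      rw [Finset.mul_sum, Finset.mul_sum, ← Finset.sum_add_distrib]
      refine Finset.sum_congr rfl fun j _ => ?_
      rw [hsingle j]
      ring
    rw [this, hinnv, hlamv]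
    ring

end
end
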